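/- arXiv:1712.03807 — 2 statements merged into one kernel-verified Lean document; each statement's English description precedes it below -/
import Mathlib

section
/- Let J ⊆ ℝ be an open interval and let B̃ : J → ℝ^{d×d} and ã : J → ℝ^{d×d} be continuous. Suppose L̃ : J → ℝ^{m×d} is differentiable with L̃′(t) = −L̃(t) B̃(t), suppose M̃† : J → ℝ^{m×m} is differentiable with (M̃†)′(t) = −L̃(t) ã(t) L̃(t)ᵀ, and suppose for every t ∈ J both M̃†(t) and H̃(t) := L̃(t)ᵀ M̃†(t)⁻¹ L̃(t) are invertible; write M̃(t) := M̃†(t)⁻¹ and H̃†(t) := H̃(t)⁻¹. Then the map t ↦ H̃†(t) L̃(t)ᵀ M̃(t) is differentiable on J with derivative B̃(t) H̃†(t) L̃(t)ᵀ M̃(t) at every t ∈ J. -/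
open Matrix

attribute [local instance] Matrix.linftyOpNormedAddCommGroup Matrix.linftyOpNormedSpace
  Matrix.linftyOpNormedRing Matrix.linftyOpNormedAlgebra

section Bridge

variable {p q r : ℕ}

/-- Entry extraction as a continuous linear map. -/
noncomputable def entryCLM (i : Fin p) (j : Fin q) : Matrix (Fin p) (Fin q) ℝ →L[ℝ] ℝ :=
  LinearMap.toContinuousLinearMap
    { toFun := fun A => A i j
      map_add' := fun _ _ => rfl
      map_smul' := fun _ _ => rfl }

theorem hasDerivAt_matrix {f : ℝ → Matrix (Fin p) (Fin q) ℝ}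
    {f' : Matrix (Fin p) (Fin q) ℝ} {t : ℝ} :
    HasDerivAt f f' t ↔ ∀ i j, HasDerivAt (fun s => f s i j) (f' i j) t := by
  constructor
  · intro h i j
    exact ((entryCLM i j).hasFDerivAt.comp_hasDerivAt t h)
  · intro h
    have e : ∀ (g : Matrix (Fin p) (Fin q) ℝ),
        (∑ i, ∑ j, g i j • Matrix.single i j (1 : ℝ)) = g := by
      intro g
      conv_rhs => rw [matrix_eq_sum_single g]
      simp [smul_single]
    have h2 : HasDerivAt (fun s => ∑ i, ∑ j, f s i j • Matrix.single i j (1 : ℝ))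
        (∑ i, ∑ j, f' i j • Matrix.single i j (1 : ℝ)) t :=
      HasDerivAt.fun_sum fun i _ => HasDerivAt.fun_sum fun j _ => (h i j).smul_const _
    simpa only [e] using h2

theorem HasDerivAt.matrixMul {f : ℝ → Matrix (Fin p) (Fin q) ℝ}
    {g : ℝ → Matrix (Fin q) (Fin r) ℝ} {f' : Matrix (Fin p) (Fin q) ℝ}
    {g' : Matrix (Fin q) (Fin r) ℝ} {t : ℝ}
    (hf : HasDerivAt f f' t) (hg : HasDerivAt g g' t) :
    HasDerivAt (fun s => f s * g s) (f' * g t + f t * g') t := by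
  rw [hasDerivAt_matrix] at hf hg ⊢
  intro i j
  have h : HasDerivAt (fun s => ∑ k, f s i k * g s k j)
      (∑ k, (f' i k * g t k j + f t i k * g' k j)) t :=
    HasDerivAt.fun_sum fun k _ => (hf i k).mul (hg k j)
  simpa [Matrix.mul_apply, Matrix.add_apply, Finset.sum_add_distrib] using h

theorem HasDerivAt.matrixTranspose {f : ℝ → Matrix (Fin p) (Fin q) ℝ}
    {f' : Matrix (Fin p) (Fin q) ℝ} {t : ℝ} (hf : HasDerivAt f f' t) :
    HasDerivAt (fun s => (f s)ᵀ) f'ᵀ t := by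
  rw [hasDerivAt_matrix] at hf ⊢
  intro i j
  simpa [Matrix.transpose_apply] using hf j i

theorem HasDerivAt.matrixInv {f : ℝ → Matrix (Fin p) (Fin p) ℝ}
    {f' : Matrix (Fin p) (Fin p) ℝ} {t : ℝ} (hf : HasDerivAt f f' t)
    (hu : IsUnit (f t)) :
    HasDerivAt (fun s => (f s)⁻¹) (-((f t)⁻¹ * f' * (f t)⁻¹)) t := by
  obtain ⟨u, hueq⟩ := hu
  have h1 : HasFDerivAt Ring.inverse
      (-(ContinuousLinearMap.mulLeftRight ℝ _ ↑u⁻¹ ↑u⁻¹)) (f t) := by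
    rw [← hueq]; exact hasFDerivAt_ringInverse (𝕜 := ℝ) u
  have h2 := h1.comp_hasDerivAt t hf
  have e : (fun s => (f s)⁻¹) = fun s => Ring.inverse (f s) := by
    funext s; exact Matrix.nonsing_inv_eq_ringInverse _
  rw [e]
  refine h2.congr_deriv ?_
  have hc : (↑u⁻¹ : Matrix (Fin p) (Fin p) ℝ) = (f t)⁻¹ := by
    rw [← hueq]; exact Matrix.coe_units_inv u
  simp [hc]

end Bridge

section Algebra

theorem auxB {d : ℕ} (Bm A H : Matrix (Fin d) (Fin d) ℝ) (hdet : IsUnit H.det) :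
    -(H⁻¹ * (-(Bmᵀ * H) + (H * (A * H) - H * Bm)) * H⁻¹)
      = H⁻¹ * Bmᵀ - A + Bm * H⁻¹ := by
  have h1 : H * H⁻¹ = 1 := Matrix.mul_nonsing_inv _ hdet
  have h2 : ∀ X : Matrix (Fin d) (Fin d) ℝ, H⁻¹ * (H * X) = X := fun X =>
    Matrix.nonsing_inv_mul_cancel_left _ X hdet
  simp only [Matrix.mul_add, Matrix.mul_sub, Matrix.mul_neg, Matrix.neg_mul,
    Matrix.add_mul, Matrix.sub_mul, Matrix.mul_assoc, h1, h2, Matrix.mul_one,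
    neg_neg, neg_add_rev, neg_sub]
  abel

theorem auxC {d m : ℕ} (Bm A : Matrix (Fin d) (Fin d) ℝ) (L : Matrix (Fin m) (Fin d) ℝ)
    (Mi : Matrix (Fin m) (Fin m) ℝ) (Hi : Matrix (Fin d) (Fin d) ℝ)
    (hc : ∀ X : Matrix (Fin d) (Fin m) ℝ, Hi * (Lᵀ * (Mi * (L * X))) = X) :
    ((Hi * Bmᵀ - A + Bm * Hi) * Lᵀ + Hi * (-(Bmᵀ * Lᵀ))) * Mi
        + (Hi * Lᵀ) * (Mi * (L * A * Lᵀ) * Mi)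
      = Bm * (Hi * Lᵀ * Mi) := by
  simp only [Matrix.add_mul, Matrix.sub_mul, Matrix.neg_mul, Matrix.mul_neg,
    Matrix.mul_assoc, hc, neg_neg]
  abel

end Algebra

theorem deriv_Hdagger_Lt_M {d m : ℕ} (a b : ℝ)
    (Btil atil : ℝ → Matrix (Fin d) (Fin d) ℝ)
    (hB : ContinuousOn Btil (Set.Ioo a b)) (ha : ContinuousOn atil (Set.Ioo a b))
    (Ltil : ℝ → Matrix (Fin m) (Fin d) ℝ)
    (hLtil : ∀ t ∈ Set.Ioo a b, ∀ i j,
      HasDerivAt (fun s => Ltil s i j) ((-(Ltil t * Btil t)) i j) t)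
    (Mdag : ℝ → Matrix (Fin m) (Fin m) ℝ)
    (hMdag : ∀ t ∈ Set.Ioo a b, ∀ i j,
      HasDerivAt (fun s => Mdag s i j) ((-(Ltil t * atil t * (Ltil t)ᵀ)) i j) t)
    (hMinv : ∀ t ∈ Set.Ioo a b, IsUnit (Mdag t))
    (hHinv : ∀ t ∈ Set.Ioo a b, IsUnit ((Ltil t)ᵀ * (Mdag t)⁻¹ * Ltil t)) :
    ∀ t ∈ Set.Ioo a b, ∀ i j,
      HasDerivAt
        (fun s => (((Ltil s)ᵀ * (Mdag s)⁻¹ * Ltil s)⁻¹ * (Ltil s)ᵀ * (Mdag s)⁻¹) i j)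
        ((Btil t *
          (((Ltil t)ᵀ * (Mdag t)⁻¹ * Ltil t)⁻¹ * (Ltil t)ᵀ * (Mdag t)⁻¹)) i j) t := by
  intro t ht
  have hMu := hMinv t ht
  have hHu := hHinv t ht
  have hHdet : IsUnit ((Ltil t)ᵀ * (Mdag t)⁻¹ * Ltil t).det :=
    (Matrix.isUnit_iff_isUnit_det _).mp hHu
  have hL : HasDerivAt Ltil (-(Ltil t * Btil t)) t := hasDerivAt_matrix.mpr (hLtil t ht)
  have hM : HasDerivAt Mdag (-(Ltil t * atil t * (Ltil t)ᵀ)) t :=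
    hasDerivAt_matrix.mpr (hMdag t ht)
  have hLT : HasDerivAt (fun s => (Ltil s)ᵀ) (-((Btil t)ᵀ * (Ltil t)ᵀ)) t := by
    simpa [Matrix.transpose_neg, Matrix.transpose_mul] using hL.matrixTranspose
  have hMi : HasDerivAt (fun s => (Mdag s)⁻¹)
      ((Mdag t)⁻¹ * (Ltil t * atil t * (Ltil t)ᵀ) * (Mdag t)⁻¹) t := by
    simpa only [Matrix.mul_neg, Matrix.neg_mul, neg_neg] using hM.matrixInv hMu
  have hH : HasDerivAt (fun s => (Ltil s)ᵀ * (Mdag s)⁻¹ * Ltil s)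
      (-((Btil t)ᵀ * ((Ltil t)ᵀ * (Mdag t)⁻¹ * Ltil t))
        + (((Ltil t)ᵀ * (Mdag t)⁻¹ * Ltil t) * (atil t * ((Ltil t)ᵀ * (Mdag t)⁻¹ * Ltil t))
          - ((Ltil t)ᵀ * (Mdag t)⁻¹ * Ltil t) * Btil t)) t := by
    have h := (hLT.matrixMul hMi).matrixMul hL
    convert h using 1
    simp only [Matrix.mul_assoc, Matrix.add_mul, Matrix.neg_mul, Matrix.mul_neg,
      Matrix.sub_mul, Matrix.mul_add]
    abel
  have hHi : HasDerivAt (fun s => ((Ltil s)ᵀ * (Mdag s)⁻¹ * Ltil s)⁻¹)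
      (((Ltil t)ᵀ * (Mdag t)⁻¹ * Ltil t)⁻¹ * (Btil t)ᵀ - atil t
        + Btil t * ((Ltil t)ᵀ * (Mdag t)⁻¹ * Ltil t)⁻¹) t := by
    have h := hH.matrixInv hHu
    rw [auxB _ _ _ hHdet] at h
    exact h
  have hc : ∀ X : Matrix (Fin d) (Fin m) ℝ,
      ((Ltil t)ᵀ * (Mdag t)⁻¹ * Ltil t)⁻¹ * ((Ltil t)ᵀ * ((Mdag t)⁻¹ * (Ltil t * X))) = X := by
    intro X
    have e : (Ltil t)ᵀ * ((Mdag t)⁻¹ * (Ltil t * X))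
        = ((Ltil t)ᵀ * (Mdag t)⁻¹ * Ltil t) * X := by
      simp only [Matrix.mul_assoc]
    rw [e]
    exact Matrix.nonsing_inv_mul_cancel_left _ X hHdet
  have hN : HasDerivAt (fun s => ((Ltil s)ᵀ * (Mdag s)⁻¹ * Ltil s)⁻¹ * (Ltil s)ᵀ * (Mdag s)⁻¹)
      (((((Ltil t)ᵀ * (Mdag t)⁻¹ * Ltil t)⁻¹ * (Btil t)ᵀ - atil t
            + Btil t * ((Ltil t)ᵀ * (Mdag t)⁻¹ * Ltil t)⁻¹) * (Ltil t)ᵀ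
          + ((Ltil t)ᵀ * (Mdag t)⁻¹ * Ltil t)⁻¹ * (-((Btil t)ᵀ * (Ltil t)ᵀ))) * (Mdag t)⁻¹
        + (((Ltil t)ᵀ * (Mdag t)⁻¹ * Ltil t)⁻¹ * (Ltil t)ᵀ)
            * ((Mdag t)⁻¹ * (Ltil t * atil t * (Ltil t)ᵀ) * (Mdag t)⁻¹)) t :=
    (hHi.matrixMul hLT).matrixMul hMi
  rw [auxC (Btil t) (atil t) (Ltil t) ((Mdag t)⁻¹) _ hc] at hN
  exact fun i j => hasDerivAt_matrix.mp hN i j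
end

section
/- Let J ⊆ ℝ be an open interval and let B̃ : J → ℝ^{d×d}, ã : J → ℝ^{d×d} and β̃ : J → ℝ^d be continuous. Suppose L̃ : J → ℝ^{m×d} is differentiable with L̃′(t) = −L̃(t) B̃(t), suppose M̃† : J → ℝ^{m×m} is differentiable with (M̃†)′(t) = −L̃(t) ã(t) L̃(t)ᵀ, suppose μ : J → ℝ^m is differentiable with μ′(t) = −L̃(t) β̃(t), and suppose for every t ∈ J both M̃†(t) and H̃(t) := L̃(t)ᵀ M̃†(t)⁻¹ L̃(t) are invertible; write M̃(t) := M̃†(t)⁻¹ and H̃†(t) := H̃(t)⁻¹. Fix a vector x_obs ∈ ℝ^m and define ν(t) := H̃†(t) L̃(t)ᵀ M̃(t) (x_obs − μ(t)). Then ν is differentiable on J and satisfies ν′(t) = B̃(t) ν(t) + β̃(t) for every t ∈ J. -/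
open Matrix

/-- Entrywise derivative of a matrix product. -/
theorem hdMul_entrywise {m n p : ℕ} {A : ℝ → Matrix (Fin m) (Fin n) ℝ}
    {B : ℝ → Matrix (Fin n) (Fin p) ℝ} {A' : Matrix (Fin m) (Fin n) ℝ}
    {B' : Matrix (Fin n) (Fin p) ℝ} {t : ℝ}
    (hA : ∀ i j, HasDerivAt (fun s => A s i j) (A' i j) t)
    (hB : ∀ i j, HasDerivAt (fun s => B s i j) (B' i j) t) :
    ∀ i j, HasDerivAt (fun s => (A s * B s) i j) ((A' * B t + A t * B') i j) t := by
  intro i j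
  have h := HasDerivAt.fun_sum (u := Finset.univ)
    (A := fun k s => A s i k * B s k j)
    (fun k _ => ((hA i k).mul (hB k j)))
  simp only [Matrix.mul_apply, Matrix.add_apply]
  rw [Finset.sum_add_distrib] at h
  exact h

/-- Entrywise derivative of a matrix-vector product. -/
theorem hdMulVec_entrywise {m n : ℕ} {A : ℝ → Matrix (Fin m) (Fin n) ℝ}
    {v : ℝ → Fin n → ℝ} {A' : Matrix (Fin m) (Fin n) ℝ} {v' : Fin n → ℝ} {t : ℝ}
    (hA : ∀ i j, HasDerivAt (fun s => A s i j) (A' i j) t)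
    (hv : ∀ j, HasDerivAt (fun s => v s j) (v' j) t) :
    ∀ i, HasDerivAt (fun s => (A s *ᵥ v s) i) ((A' *ᵥ v t + A t *ᵥ v') i) t := by
  intro i
  have h := HasDerivAt.fun_sum (u := Finset.univ)
    (A := fun k s => A s i k * v s k)
    (fun k _ => ((hA i k).mul (hv k)))
  simp only [Matrix.mulVec, dotProduct, Pi.add_apply]
  rw [Finset.sum_add_distrib] at h
  exact h

/-- Differentiability of the determinant from entrywise differentiability. -/
theorem diffDet_entrywise {n : ℕ} {A : ℝ → Matrix (Fin n) (Fin n) ℝ} {t : ℝ}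
    (hA : ∀ i j, DifferentiableAt ℝ (fun s => A s i j) t) :
    DifferentiableAt ℝ (fun s => (A s).det) t := by
  simp only [Matrix.det_apply, Units.smul_def, zsmul_eq_mul]
  apply DifferentiableAt.fun_sum
  intro σ _
  exact (DifferentiableAt.fun_finsetProd (fun i _ => hA (σ i) i)).const_mul _

/-- Differentiability of adjugate entries. -/
theorem diffAdj_entrywise {n : ℕ} {A : ℝ → Matrix (Fin n) (Fin n) ℝ} {t : ℝ}
    (hA : ∀ i j, DifferentiableAt ℝ (fun s => A s i j) t) :
    ∀ i j, DifferentiableAt ℝ (fun s => (A s).adjugate i j) t := by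
  intro i j
  simp only [Matrix.adjugate_apply]
  apply diffDet_entrywise
  intro k l
  simp only [Matrix.updateRow_apply]
  by_cases hk : k = j
  · simp [hk]
  · simp only [hk, if_false]
    exact hA k l

/-- Differentiability of the entries of the inverse matrix. -/
theorem diffInv_entrywise {n : ℕ} {A : ℝ → Matrix (Fin n) (Fin n) ℝ} {t : ℝ}
    (hA : ∀ i j, DifferentiableAt ℝ (fun s => A s i j) t) (hu : IsUnit (A t)) :
    ∀ i j, DifferentiableAt ℝ (fun s => (A s)⁻¹ i j) t := by
  have hdet : (A t).det ≠ 0 := ((Matrix.isUnit_iff_isUnit_det _).mp hu).ne_zero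
  intro i j
  have heq : (fun s => (A s)⁻¹ i j) = fun s => ((A s).det)⁻¹ * (A s).adjugate i j := by
    funext s
    rw [Matrix.inv_def]
    simp [Ring.inverse_eq_inv, smul_eq_mul]
  rw [heq]
  exact ((diffDet_entrywise hA).inv hdet).mul (diffAdj_entrywise hA i j)

/-- Entrywise derivative of the inverse of a matrix-valued function. -/
theorem hdInv_entrywise {n : ℕ} {A : ℝ → Matrix (Fin n) (Fin n) ℝ}
    {A' : Matrix (Fin n) (Fin n) ℝ} {t : ℝ}
    (hA : ∀ i j, HasDerivAt (fun s => A s i j) (A' i j) t) (hu : IsUnit (A t)) :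
    ∀ i j, HasDerivAt (fun s => (A s)⁻¹ i j)
      ((-((A t)⁻¹ * A' * (A t)⁻¹)) i j) t := by
  have hAd : ∀ i j, DifferentiableAt ℝ (fun s => A s i j) t :=
    fun i j => (hA i j).differentiableAt
  have hdetU : IsUnit (A t).det := (Matrix.isUnit_iff_isUnit_det _).mp hu
  have hdet : (A t).det ≠ 0 := hdetU.ne_zero
  have hinvd : ∀ i j, DifferentiableAt ℝ (fun s => (A s)⁻¹ i j) t :=
    diffInv_entrywise hAd hu
  set W : Matrix (Fin n) (Fin n) ℝ :=
    Matrix.of fun i j => deriv (fun s => (A s)⁻¹ i j) t with hWdef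
  have hW : ∀ i j, HasDerivAt (fun s => (A s)⁻¹ i j) (W i j) t :=
    fun i j => (hinvd i j).hasDerivAt
  have hev : ∀ᶠ s in nhds t, (A s).det ≠ 0 :=
    (diffDet_entrywise hAd).continuousAt.eventually_ne hdet
  have hprod := hdMul_entrywise hA hW
  have hzero : A' * (A t)⁻¹ + A t * W = 0 := by
    ext i j
    have hone : HasDerivAt (fun s => (A s * (A s)⁻¹) i j) 0 t := by
      have hc : (fun _ : ℝ => (1 : Matrix (Fin n) (Fin n) ℝ) i j)
          =ᶠ[nhds t] (fun s => (A s * (A s)⁻¹) i j) := by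
        filter_upwards [hev] with s hs
        rw [Matrix.mul_nonsing_inv _ (isUnit_iff_ne_zero.mpr hs)]
      exact (hasDerivAt_const t _).congr_of_eventuallyEq hc.symm
    have := (hprod i j).unique hone
    simpa using this
  have hsolve : W = -((A t)⁻¹ * A' * (A t)⁻¹) := by
    have h1 : A t * W = -(A' * (A t)⁻¹) := by
      rw [eq_neg_iff_add_eq_zero, add_comm]
      exact hzero
    calc W = ((A t)⁻¹ * A t) * W := by rw [Matrix.nonsing_inv_mul _ hdetU, Matrix.one_mul]
      _ = (A t)⁻¹ * (A t * W) := by rw [Matrix.mul_assoc]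
      _ = (A t)⁻¹ * (-(A' * (A t)⁻¹)) := by rw [h1]
      _ = -((A t)⁻¹ * A' * (A t)⁻¹) := by rw [Matrix.mul_neg, Matrix.mul_assoc]
  intro i j
  rw [← hsolve]
  exact hW i j

/-- The key noncommutative algebraic identity: the derivative of
`H̃⁻¹ L̃ᵀ M̃` equals `B̃` times it. -/
theorem keyAlg_backward {d m : ℕ} (L : Matrix (Fin m) (Fin d) ℝ)
    (B a : Matrix (Fin d) (Fin d) ℝ)
    (Mi : Matrix (Fin m) (Fin m) ℝ) (Hi : Matrix (Fin d) (Fin d) ℝ)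
    (h1 : Hi * (Lᵀ * Mi * L) = 1) (h2 : (Lᵀ * Mi * L) * Hi = 1) :
    (-(Hi * (((-(L * B))ᵀ * Mi + Lᵀ * (-(Mi * (-(L * a * Lᵀ)) * Mi))) * L
          + (Lᵀ * Mi) * (-(L * B))) * Hi) * Lᵀ
        + Hi * (-(L * B))ᵀ) * Mi
      + (Hi * Lᵀ) * (-(Mi * (-(L * a * Lᵀ)) * Mi))
    = B * ((Hi * Lᵀ) * Mi) := by
  have e1 : ∀ X : Matrix (Fin d) (Fin m) ℝ, Hi * (Lᵀ * (Mi * (L * X))) = X := by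
    intro X
    calc Hi * (Lᵀ * (Mi * (L * X))) = (Hi * (Lᵀ * Mi * L)) * X := by
          simp only [Matrix.mul_assoc]
      _ = X := by rw [h1, Matrix.one_mul]
  have e2 : ∀ X : Matrix (Fin d) (Fin m) ℝ, Lᵀ * (Mi * (L * (Hi * X))) = X := by
    intro X
    calc Lᵀ * (Mi * (L * (Hi * X))) = ((Lᵀ * Mi * L) * Hi) * X := by
          simp only [Matrix.mul_assoc]
      _ = X := by rw [h2, Matrix.one_mul]
  simp only [Matrix.transpose_neg, Matrix.transpose_mul, Matrix.neg_mul, Matrix.mul_neg,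
    neg_neg, Matrix.add_mul, Matrix.mul_add, Matrix.mul_assoc, e1, e2]
  abel

theorem backward_ode_for_nu {d m : ℕ} (a b : ℝ)
    (Btil atil : ℝ → Matrix (Fin d) (Fin d) ℝ) (βtil : ℝ → Fin d → ℝ)
    (hB : ContinuousOn Btil (Set.Ioo a b)) (ha : ContinuousOn atil (Set.Ioo a b))
    (hβ : ContinuousOn βtil (Set.Ioo a b))
    (Ltil : ℝ → Matrix (Fin m) (Fin d) ℝ)
    (hLtil : ∀ t ∈ Set.Ioo a b, ∀ i j,
      HasDerivAt (fun s => Ltil s i j) ((-(Ltil t * Btil t)) i j) t)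
    (Mdag : ℝ → Matrix (Fin m) (Fin m) ℝ)
    (hMdag : ∀ t ∈ Set.Ioo a b, ∀ i j,
      HasDerivAt (fun s => Mdag s i j) ((-(Ltil t * atil t * (Ltil t)ᵀ)) i j) t)
    (μ : ℝ → Fin m → ℝ)
    (hμ : ∀ t ∈ Set.Ioo a b, ∀ i,
      HasDerivAt (fun s => μ s i) ((-(Ltil t *ᵥ βtil t)) i) t)
    (hMinv : ∀ t ∈ Set.Ioo a b, IsUnit (Mdag t))
    (hHinv : ∀ t ∈ Set.Ioo a b, IsUnit ((Ltil t)ᵀ * (Mdag t)⁻¹ * Ltil t))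
    (xobs : Fin m → ℝ)
    (ν : ℝ → Fin d → ℝ)
    (hν : ∀ t, ν t =
      (((Ltil t)ᵀ * (Mdag t)⁻¹ * Ltil t)⁻¹ * (Ltil t)ᵀ * (Mdag t)⁻¹) *ᵥ
        (xobs - μ t)) :
    ∀ t ∈ Set.Ioo a b, ∀ i,
      HasDerivAt (fun s => ν s i) ((Btil t *ᵥ ν t + βtil t) i) t := by
  intro t ht i
  have hL := hLtil t ht
  have hT : ∀ i j, HasDerivAt (fun s => (Ltil s)ᵀ i j)
      ((-(Ltil t * Btil t))ᵀ i j) t := by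
    intro i j
    simpa only [Matrix.transpose_apply] using hLtil t ht j i
  have hMi := hdInv_entrywise (hMdag t ht) (hMinv t ht)
  have hK := hdMul_entrywise hT hMi
  have hHm := hdMul_entrywise hK hL
  have hHi := hdInv_entrywise hHm (hHinv t ht)
  have hQ := hdMul_entrywise hHi hT
  have hG := hdMul_entrywise hQ hMi
  have hw : ∀ k, HasDerivAt (fun s => (xobs - μ s) k) ((Ltil t *ᵥ βtil t) k) t := by
    intro k
    have h := (hasDerivAt_const t (xobs k)).fun_sub (hμ t ht k)
    simpa using h
  have hνd := hdMulVec_entrywise hG hw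
  have hdetH : IsUnit ((Ltil t)ᵀ * (Mdag t)⁻¹ * Ltil t).det :=
    (Matrix.isUnit_iff_isUnit_det _).mp (hHinv t ht)
  have h1 := Matrix.nonsing_inv_mul _ hdetH
  have h2 := Matrix.mul_nonsing_inv _ hdetH
  have key := keyAlg_backward (Ltil t) (Btil t) (atil t) ((Mdag t)⁻¹)
    (((Ltil t)ᵀ * (Mdag t)⁻¹ * Ltil t)⁻¹) h1 h2
  have hGL : (((Ltil t)ᵀ * (Mdag t)⁻¹ * Ltil t)⁻¹ * (Ltil t)ᵀ * (Mdag t)⁻¹) * Ltil t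
      = 1 := by
    calc (((Ltil t)ᵀ * (Mdag t)⁻¹ * Ltil t)⁻¹ * (Ltil t)ᵀ * (Mdag t)⁻¹) * Ltil t
        = ((Ltil t)ᵀ * (Mdag t)⁻¹ * Ltil t)⁻¹ * ((Ltil t)ᵀ * (Mdag t)⁻¹ * Ltil t) := by
          simp only [Matrix.mul_assoc]
      _ = 1 := h1
  have hfun : (fun s => ν s i)
      = fun s => (((((Ltil s)ᵀ * (Mdag s)⁻¹ * Ltil s)⁻¹ * (Ltil s)ᵀ * (Mdag s)⁻¹)) *ᵥ
          (xobs - μ s)) i := by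
    funext s
    rw [hν s]
  rw [hfun]
  convert hνd i using 1
  rw [key, hν t, Matrix.mulVec_mulVec, ← Matrix.mul_assoc]
  rw [show (((Ltil t)ᵀ * (Mdag t)⁻¹ * Ltil t)⁻¹ * (Ltil t)ᵀ * (Mdag t)⁻¹) *ᵥ
      (Ltil t *ᵥ βtil t)
      = βtil t by rw [Matrix.mulVec_mulVec, hGL, Matrix.one_mulVec]]
end
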